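/- Let v ∈ ℚ[[q,t]] be the unique formal power series with zero constant term satisfying (1−t)·v = q·(1−v)·(t−v). For j = 1, 2 let V_j ∈ ℚ[[q]] be the one-variable power series whose coefficient of q^n equals the coefficient of q^n t^j in v. Then (1+q)·V₁ = q and (1+q)³·V₂ = q as identities in ℚ[[q]]. (Equivalently, after the substitution t = 1−y, one has v = (1−y)·q/(1+q) + (1−y)²·q/(1+q)³ + O((1−y)³).) -/

import Mathlib

/-- The coefficient of `q^n t^k` in a two-variable formal power series over `ℚ`,
where `q` is the variable of index `0` and `t` is the variable of index `1`. -/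
noncomputable def coeffQT (n k : ℕ) (u : MvPowerSeries (Fin 2) ℚ) : ℚ :=
  MvPowerSeries.coeff (Finsupp.single (0 : Fin 2) n + Finsupp.single (1 : Fin 2) k) u

/-- The one-variable series whose coefficient of `q^n` is the coefficient of
`q^n t^j` in `v`. -/
noncomputable def sliceT (j : ℕ) (v : MvPowerSeries (Fin 2) ℚ) : PowerSeries ℚ :=
  PowerSeries.mk fun n => coeffQT n j v

lemma coeffQT_mul (a b : MvPowerSeries (Fin 2) ℚ) (n k : ℕ) :
    coeffQT n k (a * b) = ∑ p ∈ Finset.HasAntidiagonal.antidiagonal n, ∑ r ∈ Finset.HasAntidiagonal.antidiagonal k,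
      coeffQT p.1 r.1 a * coeffQT p.2 r.2 b := by
  rw [coeffQT, MvPowerSeries.coeff_mul, ← Finset.sum_product']
  refine Finset.sum_nbij' (fun y => ((y.1 0, y.2 0), (y.1 1, y.2 1)))
    (fun x => (Finsupp.single 0 x.1.1 + Finsupp.single 1 x.2.1,
               Finsupp.single 0 x.1.2 + Finsupp.single 1 x.2.2)) ?_ ?_ ?_ ?_ ?_
  · rintro ⟨y1, y2⟩ hy
    rw [Finset.HasAntidiagonal.mem_antidiagonal] at hy
    simp only [Finset.mem_product, Finset.HasAntidiagonal.mem_antidiagonal]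
    constructor
    · have := DFunLike.congr_fun hy 0; simpa using this
    · have := DFunLike.congr_fun hy 1; simpa using this
  · rintro ⟨⟨i, j⟩, ⟨p, r⟩⟩ hx
    simp only [Finset.mem_product, Finset.HasAntidiagonal.mem_antidiagonal] at hx
    rw [Finset.HasAntidiagonal.mem_antidiagonal]
    obtain ⟨h1, h2⟩ := hx
    ext s; fin_cases s <;> simp [h1, h2]
  · rintro ⟨y1, y2⟩ hy
    have e : ∀ d : Fin 2 →₀ ℕ, Finsupp.single 0 (d 0) + Finsupp.single 1 (d 1) = d := by
      intro d; ext s; fin_cases s <;> simp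
    simp [e]
  · rintro ⟨⟨i, j⟩, ⟨p, r⟩⟩ hx
    simp [Finsupp.single_apply]
  · rintro ⟨y1, y2⟩ hy
    have e : ∀ d : Fin 2 →₀ ℕ, Finsupp.single 0 (d 0) + Finsupp.single 1 (d 1) = d := by
      intro d; ext s; fin_cases s <;> simp
    simp only [coeffQT, e]

lemma fin2_eq_iff (d e : Fin 2 →₀ ℕ) : d = e ↔ d 0 = e 0 ∧ d 1 = e 1 := by
  constructor
  · rintro rfl; exact ⟨rfl, rfl⟩
  · rintro ⟨h0, h1⟩; ext s; fin_cases s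
    · simpa using h0
    · simpa using h1

lemma coeffQT_one (n j : ℕ) : coeffQT n j (1 : MvPowerSeries (Fin 2) ℚ)
    = if n = 0 ∧ j = 0 then 1 else 0 := by
  rw [coeffQT, MvPowerSeries.coeff_one]
  congr 1
  rw [eq_iff_iff, fin2_eq_iff]
  simp [Finsupp.single_apply]

lemma coeffQT_X0 (n j : ℕ) : coeffQT n j (MvPowerSeries.X 0 : MvPowerSeries (Fin 2) ℚ)
    = if n = 1 ∧ j = 0 then 1 else 0 := by
  rw [coeffQT, MvPowerSeries.coeff_X]
  congr 1
  rw [eq_iff_iff, fin2_eq_iff]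
  simp [Finsupp.single_apply]

lemma coeffQT_X1 (n j : ℕ) : coeffQT n j (MvPowerSeries.X 1 : MvPowerSeries (Fin 2) ℚ)
    = if n = 0 ∧ j = 1 then 1 else 0 := by
  rw [coeffQT, MvPowerSeries.coeff_X]
  congr 1
  rw [eq_iff_iff, fin2_eq_iff]
  simp [Finsupp.single_apply]

lemma sliceT_mul (a b : MvPowerSeries (Fin 2) ℚ) (k : ℕ) :
    sliceT k (a * b) = ∑ i ∈ Finset.range (k + 1), sliceT i a * sliceT (k - i) b := by
  ext n
  simp only [sliceT, PowerSeries.coeff_mk, coeffQT_mul, map_sum, PowerSeries.coeff_mul,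
    PowerSeries.coeff_mk, Finset.Nat.sum_antidiagonal_eq_sum_range_succ_mk]
  rw [Finset.sum_comm]

lemma sliceT_sub (a b : MvPowerSeries (Fin 2) ℚ) (k : ℕ) :
    sliceT k (a - b) = sliceT k a - sliceT k b := by
  ext n
  simp [sliceT, coeffQT]

lemma sliceT_one : ∀ j, sliceT j (1 : MvPowerSeries (Fin 2) ℚ) = if j = 0 then 1 else 0 := by
  intro j
  ext n
  simp only [sliceT, PowerSeries.coeff_mk, coeffQT_one]
  split_ifs <;> simp_all [PowerSeries.coeff_one]

lemma sliceT_X0 : ∀ j, sliceT j (MvPowerSeries.X 0 : MvPowerSeries (Fin 2) ℚ)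
    = if j = 0 then PowerSeries.X else 0 := by
  intro j
  ext n
  simp only [sliceT, PowerSeries.coeff_mk, coeffQT_X0]
  split_ifs <;> simp_all [PowerSeries.coeff_X]

lemma sliceT_X1 : ∀ j, sliceT j (MvPowerSeries.X 1 : MvPowerSeries (Fin 2) ℚ)
    = if j = 1 then 1 else 0 := by
  intro j
  ext n
  simp only [sliceT, PowerSeries.coeff_mk, coeffQT_X1]
  split_ifs <;> simp_all [PowerSeries.coeff_one]

/-- For the unique solution `v` (with zero constant term) of
`(1-t)·v = q·(1-v)·(t-v)`, the coefficients of `t¹` and `t²` satisfy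
`(1+q)·V₁ = q` and `(1+q)³·V₂ = q`. -/
theorem stmt2 (v : MvPowerSeries (Fin 2) ℚ)
    (hv0 : MvPowerSeries.constantCoeff v = 0)
    (hv : (1 - MvPowerSeries.X 1) * v =
        MvPowerSeries.X 0 * (1 - v) * (MvPowerSeries.X 1 - v)) :
    (1 + PowerSeries.X) * sliceT 1 v = PowerSeries.X ∧
    (1 + PowerSeries.X) ^ 3 * sliceT 2 v = PowerSeries.X := by
  have E : ∀ k, sliceT k ((1 - MvPowerSeries.X 1) * v)
      = sliceT k (MvPowerSeries.X 0 * (1 - v) * (MvPowerSeries.X 1 - v)) :=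
    fun k => congrArg _ hv
  have E0 := E 0
  have E1 := E 1
  have E2 := E 2
  simp only [sliceT_mul, Finset.sum_range_succ, Finset.sum_range_zero, sliceT_sub,
    sliceT_one, sliceT_X0, sliceT_X1] at E0 E1 E2
  norm_num at E0 E1 E2
  set s0 := sliceT 0 v with hs0
  set s1 := sliceT 1 v with hs1
  set s2 := sliceT 2 v with hs2
  have hz : s0 = 0 := by
    have hd : s0 * (1 + PowerSeries.X * (1 - s0)) = 0 := by linear_combination E0
    rcases mul_eq_zero.mp hd with h | h
    · exact h
    · exfalso
      have h2 := congrArg (PowerSeries.constantCoeff) h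
      simp [map_add, map_mul] at h2
  rw [hz] at E1 E2
  constructor
  · linear_combination E1
  · linear_combination (1 + PowerSeries.X)^2 * E2 + ((1 - PowerSeries.X) * (1 + PowerSeries.X)
      + PowerSeries.X * ((1 + PowerSeries.X) * s1 + PowerSeries.X)) * E1
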